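/- The map sending an affine permutation π ∈ S̃_n to its code c(π) = (c_1, ..., c_n), where c_i = #{j ∈ ℤ : i < j and π(i) > π(j)}, is a bijection from S̃_n onto ℕⁿ \ ℙⁿ (the set of n-tuples of nonnegative integers with at least one zero entry), and c_1 + c_2 + ... + c_n = ℓ(π). -/

import Mathlib

open scoped TensorProduct

/-- Membership in the affine symmetric group `S̃_n`, viewed inside `Equiv.Perm ℤ`. -/
def IsAffine (n : ℕ) (π : Equiv.Perm ℤ) : Prop :=
  (∀ i : ℤ, π (i + n) = π i + n) ∧
  (∑ i ∈ Finset.Icc (1 : ℤ) (n : ℤ), π i) = ∑ i ∈ Finset.Icc (1 : ℤ) (n : ℤ), i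

/-- The underlying function of the affine reflection `t_{ij}`. -/
def affTFun (n : ℕ) (i j k : ℤ) : ℤ :=
  if (k - i) % (n : ℤ) = 0 then k - i + j
  else if (k - j) % (n : ℤ) = 0 then k - j + i
  else k

theorem affTFun_involutive {n : ℕ} {i j : ℤ} (h : ¬ (j - i) % (n : ℤ) = 0) :
    Function.Involutive (affTFun n i j) := by
  have key : ∀ a : ℤ, a % (n : ℤ) = 0 ↔ (n : ℤ) ∣ a :=
    fun a => (@Int.dvd_iff_emod_eq_zero (n : ℤ) a).symm
  rw [key] at h
  intro k
  by_cases h1 : (n : ℤ) ∣ (k - i)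
  · have h2 : ¬ (n : ℤ) ∣ (k - i + j - i) := by
      intro hd
      apply h
      have h5 : j - i = (k - i + j - i) - (k - i) := by ring
      rw [h5]
      exact dvd_sub hd h1
    have h3 : (n : ℤ) ∣ (k - i + j - j) := by
      have h5 : k - i + j - j = k - i := by ring
      rw [h5]; exact h1
    have e1 : affTFun n i j k = k - i + j := by simp [affTFun, key, h1]
    have e2 : affTFun n i j (k - i + j) = k := by
      simp only [affTFun, key]
      rw [if_neg h2, if_pos h3]
      ring
    rw [e1, e2]
  · by_cases h2 : (n : ℤ) ∣ (k - j)
    · have h3 : (n : ℤ) ∣ (k - j + i - i) := by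
        have h5 : k - j + i - i = k - j := by ring
        rw [h5]; exact h2
      have e1 : affTFun n i j k = k - j + i := by simp [affTFun, key, h1, h2]
      have e2 : affTFun n i j (k - j + i) = k := by
        simp only [affTFun, key]
        rw [if_pos h3]
        ring
      rw [e1, e2]
    · have e1 : affTFun n i j k = k := by simp [affTFun, key, h1, h2]
      rw [e1, e1]

/-- The affine reflection `t_{ij}` (interpreted as the identity when `i ≡ j (mod n)`). -/
noncomputable def affT (n : ℕ) (i j : ℤ) : Equiv.Perm ℤ :=
  if h : (j - i) % (n : ℤ) = 0 then 1
  else Function.Involutive.toPerm _ (affTFun_involutive h)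

/-- The simple reflection `s_i = t_{i,i+1}` of `S̃_n`. -/
noncomputable def affS (n : ℕ) (i : ℤ) : Equiv.Perm ℤ := affT n i (i + 1)

/-- Coxeter length: minimal length of a word in the simple reflections `s_1, …, s_n`. -/
noncomputable def wordLength (n : ℕ) (π : Equiv.Perm ℤ) : ℕ :=
  sInf {l : ℕ | ∃ w : List ℤ,
    (∀ x ∈ w, 1 ≤ x ∧ x ≤ (n : ℤ)) ∧ (w.map (affS n)).prod = π ∧ w.length = l}

/-- The set of inversions of `π`, up to the diagonal translation relation. -/
def InvPair (π : Equiv.Perm ℤ) : Type :=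
  {p : ℤ × ℤ // p.1 < p.2 ∧ π p.2 < π p.1}

/-- The number of equivalence classes of inversions of `π` under
`(a,b) ~ (a + mn, b + mn)`. -/
noncomputable def invLength (n : ℕ) (π : Equiv.Perm ℤ) : ℕ :=
  Nat.card (Quot fun p q : InvPair π =>
    ∃ m : ℤ, q.1.1 = p.1.1 + m * n ∧ q.1.2 = p.1.2 + m * n)

/-- Entry `c_i` of the code of an affine permutation. -/
noncomputable def codeEntry (π : Equiv.Perm ℤ) (i : ℤ) : ℕ :=
  Nat.card {j : ℤ // i < j ∧ π j < π i}

/-- Entry `ĉ_i` of the involution code of an affine involution. -/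
noncomputable def icodeEntry (z : Equiv.Perm ℤ) (i : ℤ) : ℕ :=
  Nat.card {j : ℤ // i < j ∧ z j < z i ∧ z j ≤ i}

/-- `ℓ'(z)`: `n` minus the number of orbits of `z` acting on `ℤ/nℤ`. -/
noncomputable def lprime (n : ℕ) (z : Equiv.Perm ℤ) : ℕ :=
  n - Nat.card (Quot fun a b : ZMod n => ((z (a.val : ℤ) : ℤ) : ZMod n) = b)

/-- The characterizing properties of the Demazure (0-Hecke) product on `S̃_n`:
closure, associativity, `s_i ∘ s_i = s_i`, and agreement with the group product
on length-additive factorizations. -/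
def IsDemazure (n : ℕ) (D : Equiv.Perm ℤ → Equiv.Perm ℤ → Equiv.Perm ℤ) : Prop :=
  (∀ a b, IsAffine n a → IsAffine n b → IsAffine n (D a b)) ∧
  (∀ a b c, IsAffine n a → IsAffine n b → IsAffine n c →
    D (D a b) c = D a (D b c)) ∧
  (∀ i : ℤ, D (affS n i) (affS n i) = affS n i) ∧
  (∀ a b, IsAffine n a → IsAffine n b →
    wordLength n (a * b) = wordLength n a + wordLength n b → D a b = a * b)

/-- The set of Hecke atoms `{π : π⁻¹ ∘ π = z}`. -/
def AHecke (n : ℕ) (D : Equiv.Perm ℤ → Equiv.Perm ℤ → Equiv.Perm ℤ)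
    (z : Equiv.Perm ℤ) : Set (Equiv.Perm ℤ) :=
  {π | IsAffine n π ∧ D π⁻¹ π = z}

/-- The set of atoms: minimal-length Hecke atoms. -/
def DemAtoms (n : ℕ) (D : Equiv.Perm ℤ → Equiv.Perm ℤ → Equiv.Perm ℤ)
    (z : Equiv.Perm ℤ) : Set (Equiv.Perm ℤ) :=
  {π | π ∈ AHecke n D z ∧ ∀ σ ∈ AHecke n D z, wordLength n π ≤ wordLength n σ}

/-- The Bruhat covering relation on `S̃_n`. -/
def BruhatCov (n : ℕ) (a b : Equiv.Perm ℤ) : Prop :=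
  (∃ i j : ℤ, i < j ∧ (j - i) % (n : ℤ) ≠ 0 ∧ b = a * affT n i j) ∧
  wordLength n b = wordLength n a + 1

/-- The Bruhat order on `S̃_n`. -/
def BruhatLE (n : ℕ) : Equiv.Perm ℤ → Equiv.Perm ℤ → Prop :=
  Relation.ReflTransGen (BruhatCov n)

/-- The covering relation of the Bruhat order restricted to involutions in `S̃_n`. -/
def BruhatCovI (n : ℕ) (y z : Equiv.Perm ℤ) : Prop :=
  IsAffine n y ∧ IsAffine n z ∧ y⁻¹ = y ∧ z⁻¹ = z ∧
  BruhatLE n y z ∧ y ≠ z ∧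
  ∀ w : Equiv.Perm ℤ, IsAffine n w → w⁻¹ = w →
    BruhatLE n y w → BruhatLE n w z → w = y ∨ w = z

/-- Strict dominance order on partitions (written as weakly decreasing functions). -/
def DomLT (p q : ℕ → ℕ) : Prop :=
  p ≠ q ∧ ∀ k : ℕ, ∑ i ∈ Finset.range k, p i ≤ ∑ i ∈ Finset.range k, q i

/-- The shape `λ(π)`: the transpose of the partition sorting the code of `π⁻¹`,
recorded as the weakly decreasing function `k ↦ λ(π)_{k+1}`. -/
noncomputable def affShape (n : ℕ) (π : Equiv.Perm ℤ) : ℕ → ℕ :=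
  fun k => Multiset.countP (fun x => k < x)
    ((Finset.Icc (1 : ℤ) (n : ℤ)).val.map (codeEntry π⁻¹))

/-- The shape `μ(z)`: the transpose of the partition sorting the involution code of `z`,
recorded as the weakly decreasing function `k ↦ μ(z)_{k+1}`. -/
noncomputable def invShape (n : ℕ) (z : Equiv.Perm ℤ) : ℕ → ℕ :=
  fun k => Multiset.countP (fun x => k < x)
    ((Finset.Icc (1 : ℤ) (n : ℤ)).val.map (icodeEntry z))

/-- The weakly decreasing rearrangement of a multiset of naturals, padded by zeros. -/
noncomputable def rearr (s : Multiset ℕ) : ℕ → ℕ :=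
  fun k => ((s.sort (· ≤ ·)).reverse).getD k 0

/-- Remove the entries of a list of integers that repeat an earlier residue mod `n`. -/
def dedupMod (n : ℕ) : List ℤ → List ℤ
  | [] => []
  | x :: xs => x :: dedupMod n (xs.filter fun y => (y - x) % (n : ℤ) ≠ 0)
termination_by l => l.length
decreasing_by
  simp only [List.length_cons]
  first
    | exact Nat.lt_succ_of_le (List.length_filter_le _ _)
    | (simp only [List.length_unattach]
       exact Nat.lt_succ_of_le ((List.length_filter_le _ _).trans_eq List.length_attach))

/-- The window `[[z(a₁), a₁, z(a₂), a₂, …]]` of `α_min(z)⁻¹`, where `a₁ < a₂ < ⋯`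
are the elements `a ∈ [n]` with `a ≤ z(a)`. -/
noncomputable def aminWindow (n : ℕ) (z : Equiv.Perm ℤ) : List ℤ :=
  dedupMod n
    ((((Finset.Icc (1 : ℤ) (n : ℤ)).sort (· ≤ ·)).filter fun a => a ≤ z a).flatMap
      fun a => [z a, a])

/-- Cyclically decreasing elements of `S̃_n`. -/
def IsCycDec (n : ℕ) (π : Equiv.Perm ℤ) : Prop :=
  ∃ w : List ℤ,
    (∀ x ∈ w, 1 ≤ x ∧ x ≤ (n : ℤ)) ∧ (w.map (affS n)).prod = π ∧
    w.length = wordLength n π ∧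
    w.Pairwise fun a b => (a + 1 - b) % (n : ℤ) ≠ 0

/-- The coefficient of the monomial `∏ₖ xₖ₊₁^(α k)` in Lam's affine Stanley symmetric
function `F_π`: the number of length-additive factorizations of `π` into cyclically
decreasing factors of lengths prescribed by `α`. -/
noncomputable def stanleyCoeff (n : ℕ) (π : Equiv.Perm ℤ) (α : ℕ →₀ ℕ) : ℕ :=
  Nat.card {f : ℕ → Equiv.Perm ℤ //
    (∀ k, IsCycDec n (f k)) ∧ (∀ k, wordLength n (f k) = α k) ∧
    (∑ k ∈ α.support, α k) = wordLength n π ∧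
    ∃ N : ℕ, (∀ k, N ≤ k → f k = 1) ∧ ((List.range N).map f).prod = π}

/-- The set `Φ⁻_r(y)` of Bruhat covers of `y` of the form `τⁿ_{i r}(y)` with `i < r`
and `i ∉ {r, y(r)} + nℤ`. -/
def PhiMinus (n : ℕ) (τ : ℤ → ℤ → Equiv.Perm ℤ → Equiv.Perm ℤ)
    (y : Equiv.Perm ℤ) (r : ℤ) : Set (Equiv.Perm ℤ) :=
  {z | BruhatCovI n y z ∧ ∃ i : ℤ, i < r ∧ (i - r) % (n : ℤ) ≠ 0 ∧
    (i - y r) % (n : ℤ) ≠ 0 ∧ z = τ i r y}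

/-- The set `Φ⁺_r(y)` of Bruhat covers of `y` of the form `τⁿ_{r j}(y)` with `r < j`
and `j ∉ {r, y(r)} + nℤ`. -/
def PhiPlus (n : ℕ) (τ : ℤ → ℤ → Equiv.Perm ℤ → Equiv.Perm ℤ)
    (y : Equiv.Perm ℤ) (r : ℤ) : Set (Equiv.Perm ℤ) :=
  {z | BruhatCovI n y z ∧ ∃ j : ℤ, r < j ∧ (j - r) % (n : ℤ) ≠ 0 ∧
    (j - y r) % (n : ℤ) ≠ 0 ∧ z = τ r j y}

/-- The affine symmetric group as a subtype of `Equiv.Perm ℤ`. -/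
abbrev AffPerm (n : ℕ) := {π : Equiv.Perm ℤ // IsAffine n π}

/-- The coproduct `Δ(π) = Σ_{π ≐ π'π''} π' ⊗ π''` on `ℚ S̃_n`. -/
noncomputable def affComul (n : ℕ) :
    (AffPerm n →₀ ℚ) →ₗ[ℚ] TensorProduct ℚ (AffPerm n →₀ ℚ) (AffPerm n →₀ ℚ) :=
  Finsupp.lift _ ℚ _ fun π : AffPerm n =>
    ∑ᶠ p ∈ {p : AffPerm n × AffPerm n |
        p.1.val * p.2.val = π.val ∧
        wordLength n π.val = wordLength n p.1.val + wordLength n p.2.val},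
      (Finsupp.single p.1 (1 : ℚ)) ⊗ₜ[ℚ] (Finsupp.single p.2 (1 : ℚ))


lemma modz_iff {n : ℕ} {a b : ℤ} : (a - b) % (n:ℤ) = 0 ↔ ∃ m : ℤ, a = b + m * n := by
  rw [← Int.dvd_iff_emod_eq_zero]
  constructor
  · rintro ⟨m, hm⟩; exact ⟨m, by linarith [hm]⟩
  · rintro ⟨m, hm⟩; exact ⟨m, by linarith⟩

/-- canonical representative in [1,n] -/
def resw (n : ℕ) (i : ℤ) : ℤ := (i - 1) % (n:ℤ) + 1

lemma resw_ge {n : ℕ} (hn : 0 < n) (i : ℤ) : 1 ≤ resw n i := by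
  have := Int.emod_nonneg (i - 1) (by exact_mod_cast hn.ne' : (n:ℤ) ≠ 0)
  unfold resw; omega

lemma resw_le {n : ℕ} (hn : 0 < n) (i : ℤ) : resw n i ≤ n := by
  have := Int.emod_lt_of_pos (i - 1) (by exact_mod_cast hn : (0:ℤ) < n)
  unfold resw; omega

lemma resw_spec {n : ℕ} (i : ℤ) : ∃ m : ℤ, i = resw n i + m * n := by
  refine ⟨(i - 1) / n, ?_⟩
  have := Int.emod_add_mul_ediv (i - 1) (n:ℤ)
  unfold resw; linarith

lemma int_mul_cancel {n : ℕ} {m : ℤ} (h1 : -(n:ℤ) < m * n) (h2 : m * n < n) : m = 0 := by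
  rcases lt_trichotomy m 0 with h | h | h
  · nlinarith
  · exact h
  · nlinarith

lemma resw_unique {n : ℕ} (hn : 0 < n) {k i : ℤ} (h1 : 1 ≤ k) (h2 : k ≤ n)
    (h3 : ∃ m : ℤ, k = i + m * n) : k = resw n i := by
  obtain ⟨m, hm⟩ := h3
  obtain ⟨m', hm'⟩ := resw_spec (n := n) i
  have hg := resw_ge hn i
  have hl := resw_le hn i
  have hk : k = resw n i + (m + m') * n := by
    have : (m + m') * (n:ℤ) = m * n + m' * n := by ring
    rw [this]; linarith [hm, hm']
  have h0 : (m + m') = 0 := by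
    apply int_mul_cancel (n := n) <;> omega
  rw [hk, h0]; ring

lemma shift_mul {n : ℕ} {π : Equiv.Perm ℤ} (hπ : ∀ i : ℤ, π (i + n) = π i + n) :
    ∀ (m i : ℤ), π (i + m * n) = π i + m * n := by
  have hneg : ∀ i : ℤ, π (i - n) = π i - n := by
    intro i; have := hπ (i - n); simp at this; omega
  intro m
  induction m using Int.induction_on with
  | zero => simp
  | succ k ih =>
      intro i
      have h1 : i + (k + 1 : ℤ) * n = (i + k * n) + n := by ring
      rw [h1, hπ, ih]; ring
  | pred k ih =>
      intro i
      have h1 : i + (-k - 1 : ℤ) * n = (i + (-k) * n) - n := by ring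
      rw [h1, hneg, ih]; ring

lemma one_emod_ne {n : ℕ} (h2 : 2 ≤ n) {i : ℤ} : ¬ ((i + 1) - i) % (n:ℤ) = 0 := by
  have h1 : (i + 1) - i = (1:ℤ) := by ring
  have hn' : (1:ℤ) < (n:ℤ) := by exact_mod_cast h2
  rw [h1, Int.emod_eq_of_lt (by norm_num) hn']
  norm_num

lemma affS_apply {n : ℕ} (h2 : 2 ≤ n) (i k : ℤ) :
    affS n i k = affTFun n i (i + 1) k := by
  unfold affS affT
  rw [dif_neg (one_emod_ne h2)]
  rfl

lemma affS_mul_self (n : ℕ) (i : ℤ) : affS n i * affS n i = 1 := by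
  unfold affS affT
  split_ifs with h
  · simp
  · ext k
    simp only [Equiv.Perm.mul_apply, Function.Involutive.coe_toPerm, Equiv.Perm.one_apply]
    exact affTFun_involutive h k

lemma affTFun_eq1 {n : ℕ} {i k : ℤ} (h : (k - i) % (n:ℤ) = 0) :
    affTFun n i (i + 1) k = k + 1 := by
  unfold affTFun; rw [if_pos h]; ring

lemma affTFun_eq2 {n : ℕ} (h2 : 2 ≤ n) {i k : ℤ} (h : (k - (i+1)) % (n:ℤ) = 0) :
    affTFun n i (i + 1) k = k - 1 := by
  have hne : ¬ (k - i) % (n:ℤ) = 0 := by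
    intro h'
    obtain ⟨m, hm⟩ := modz_iff.mp h'
    obtain ⟨m', hm'⟩ := modz_iff.mp h
    have : (1:ℤ) = (m - m') * n := by rw [sub_mul]; omega
    have hn' : (2:ℤ) ≤ (n:ℤ) := by exact_mod_cast h2
    rcases lt_trichotomy (m - m') 0 with hc | hc | hc
    · nlinarith
    · rw [hc] at this; norm_num at this
    · nlinarith
  unfold affTFun; rw [if_neg hne, if_pos h]; ring

lemma affTFun_eq3 {n : ℕ} {i k : ℤ} (h1 : ¬ (k - i) % (n:ℤ) = 0)
    (h2 : ¬ (k - (i+1)) % (n:ℤ) = 0) : affTFun n i (i + 1) k = k := by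
  unfold affTFun; rw [if_neg h1, if_neg h2]

lemma affTFun_shift {n : ℕ} (i k : ℤ) :
    affTFun n i (i + 1) (k + n) = affTFun n i (i + 1) k + n := by
  have e1 : (k + (n:ℤ) - i) % n = (k - i) % n := by
    have : k + (n:ℤ) - i = (k - i) + (n:ℤ) * 1 := by ring
    rw [this, Int.add_mul_emod_self_left]
  have e2 : (k + (n:ℤ) - (i+1)) % n = (k - (i+1)) % n := by
    have : k + (n:ℤ) - (i+1) = (k - (i+1)) + (n:ℤ) * 1 := by ring
    rw [this, Int.add_mul_emod_self_left]
  unfold affTFun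
  rw [e1, e2]
  split_ifs <;> ring

def codeSet (π : Equiv.Perm ℤ) (i : ℤ) : Set ℤ := {j | i < j ∧ π j < π i}

lemma codeEntry_eq_ncard (π : Equiv.Perm ℤ) (i : ℤ) :
    codeEntry π i = (codeSet π i).ncard := by
  rw [← Nat.card_coe_set_eq]; rfl

lemma exists_lb {n : ℕ} (hn : 0 < n) {π : Equiv.Perm ℤ} (hA : IsAffine n π) :
    ∃ M : ℤ, ∀ j : ℤ, M + j - n ≤ π j := by
  have hne : (Finset.Icc (1:ℤ) (n:ℤ)).Nonempty := by
    refine ⟨1, ?_⟩; simp; exact_mod_cast hn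
  refine ⟨(Finset.Icc (1:ℤ) (n:ℤ)).inf' hne π, fun j => ?_⟩
  obtain ⟨m, hm⟩ := resw_spec (n := n) j
  have h1 := resw_ge hn j
  have h2 := resw_le hn j
  have h3 : π j = π (resw n j) + m * n := by
    conv_lhs => rw [hm]
    exact shift_mul hA.1 m _
  have h4 : (Finset.Icc (1:ℤ) (n:ℤ)).inf' hne π ≤ π (resw n j) :=
    Finset.inf'_le π (by simp [Finset.mem_Icc]; exact ⟨h1, h2⟩)
  omega

lemma codeSet_finite {n : ℕ} (hn : 0 < n) {π : Equiv.Perm ℤ} (hA : IsAffine n π)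
    (i : ℤ) : (codeSet π i).Finite := by
  obtain ⟨M, hM⟩ := exists_lb hn hA
  apply Set.Finite.subset (Set.finite_Icc (i + 1) (π i - M + n))
  rintro j ⟨h1, h2⟩
  have := hM j
  simp only [Set.mem_Icc]
  omega

lemma codeSet_shift {n : ℕ} {π : Equiv.Perm ℤ} (hA : IsAffine n π) (i m : ℤ) :
    codeSet π (i + m * n) = (fun j => j + m * n) '' codeSet π i := by
  ext j
  constructor
  · rintro ⟨h1, h2⟩
    refine ⟨j - m * n, ⟨by omega, ?_⟩, by ring⟩
    have e1 : π ((j - m * n) + m * n) = π (j - m * n) + m * n := shift_mul hA.1 m _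
    have e2 : π (i + m * n) = π i + m * n := shift_mul hA.1 m _
    simp only [sub_add_cancel] at e1
    omega
  · rintro ⟨j', ⟨h1, h2⟩, rfl⟩
    have e1 : π (j' + m * n) = π j' + m * n := shift_mul hA.1 m _
    have e2 : π (i + m * n) = π i + m * n := shift_mul hA.1 m _
    show i + m * (n:ℤ) < j' + m * n ∧ π (j' + m * n) < π (i + m * n)
    omega

lemma codeEntry_shift {n : ℕ} {π : Equiv.Perm ℤ} (hA : IsAffine n π) (i m : ℤ) :
    codeEntry π (i + m * n) = codeEntry π i := by
  rw [codeEntry_eq_ncard, codeEntry_eq_ncard, codeSet_shift hA,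
    Set.ncard_image_of_injective _ (add_left_injective (m * (n:ℤ)))]

lemma codeEntry_resw {n : ℕ} (hn : 0 < n) {π : Equiv.Perm ℤ} (hA : IsAffine n π) (i : ℤ) :
    codeEntry π i = codeEntry π (resw n i) := by
  obtain ⟨m, hm⟩ := resw_spec (n := n) i
  conv_lhs => rw [hm]
  exact codeEntry_shift hA _ m

lemma codeEntry_congr {n : ℕ} (hn : 0 < n) {π : Equiv.Perm ℤ} (hA : IsAffine n π)
    {i i' : ℤ} (h : ∃ m : ℤ, i' = i + m * n) : codeEntry π i' = codeEntry π i := by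
  obtain ⟨m, rfl⟩ := h
  exact codeEntry_shift hA i m

lemma codeEntry_eq_zero_iff {n : ℕ} (hn : 0 < n) {π : Equiv.Perm ℤ} (hA : IsAffine n π)
    (i : ℤ) : codeEntry π i = 0 ↔ ∀ j : ℤ, i < j → π i ≤ π j := by
  rw [codeEntry_eq_ncard, Set.ncard_eq_zero (codeSet_finite hn hA i)]
  constructor
  · intro h j hj
    by_contra hc
    push_neg at hc
    have hmem : j ∈ codeSet π i := ⟨hj, hc⟩
    rw [h] at hmem
    exact hmem
  · intro h
    ext j
    simp only [codeSet, Set.mem_setOf_eq, Set.mem_empty_iff_false, iff_false, not_and, not_lt]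
    exact fun hj => h j hj

lemma exists_zero_code {n : ℕ} (hn : 0 < n) {π : Equiv.Perm ℤ} (hA : IsAffine n π) :
    ∃ i : ℤ, 1 ≤ i ∧ i ≤ (n:ℤ) ∧ codeEntry π i = 0 := by
  have hne : (Finset.Icc (1:ℤ) (n:ℤ)).Nonempty := ⟨1, by simp; exact_mod_cast hn⟩
  obtain ⟨i, hi, hmin⟩ := Finset.exists_min_image (Finset.Icc (1:ℤ) (n:ℤ)) π hne
  simp only [Finset.mem_Icc] at hi
  refine ⟨i, hi.1, hi.2, ?_⟩
  rw [codeEntry_eq_zero_iff hn hA]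
  intro j hj
  obtain ⟨m, hm⟩ := resw_spec (n := n) j
  have h1 := resw_ge hn j
  have h2 := resw_le hn j
  have h3 : π j = π (resw n j) + m * n := by
    conv_lhs => rw [hm]
    exact shift_mul hA.1 m _
  have h4 : π i ≤ π (resw n j) := hmin _ (by simp [Finset.mem_Icc]; exact ⟨h1, h2⟩)
  rcases le_or_gt 0 m with hm0 | hm0
  · have : 0 ≤ m * n := mul_nonneg hm0 (by positivity)
    omega
  · exfalso
    have : m * (n:ℤ) ≤ -n := by
      have : m ≤ -1 := by omega
      nlinarith [Int.natCast_pos.mpr hn]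
    omega

lemma step_le {π : Equiv.Perm ℤ} (h : ∀ i : ℤ, π i < π (i + 1)) :
    ∀ (k : ℕ) (i : ℤ), π i + k ≤ π (i + k) := by
  intro k
  induction k with
  | zero => simp
  | succ k ih =>
      intro i
      have h1 := h (i + k)
      have h2 := ih i
      have e : i + ((k:ℤ) + 1) = (i + k) + 1 := by ring
      push_cast
      rw [e]
      omega

lemma eq_one_of_mono {n : ℕ} (hn : 0 < n) {π : Equiv.Perm ℤ} (hA : IsAffine n π)
    (h : ∀ i : ℤ, π i < π (i + 1)) : π = 1 := by
  have hstep : ∀ i : ℤ, π (i + 1) = π i + 1 := by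
    intro i
    have h1 := h i
    have h2 := step_le h (n - 1) (i + 1)
    have hc : ((n - 1 : ℕ) : ℤ) = (n:ℤ) - 1 := by
      have : 1 ≤ n := hn
      push_cast [this]; ring
    rw [hc] at h2
    have e : i + 1 + ((n:ℤ) - 1) = i + n := by ring
    rw [e] at h2
    have h3 : π (i + n) = π i + n := hA.1 i
    omega
  have hval : ∀ i : ℤ, π i = i + π 0 := by
    intro i
    induction i using Int.induction_on with
    | zero => simp
    | succ k ih => rw [hstep k, ih]; ring
    | pred k ih =>
        have := hstep (-k - 1)
        have e : (-k - 1 : ℤ) + 1 = -k := by ring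
        rw [e] at this
        omega
  have hsum := hA.2
  have hsum2 : ∑ i ∈ Finset.Icc (1:ℤ) (n:ℤ), π i
      = (∑ i ∈ Finset.Icc (1:ℤ) (n:ℤ), i) + (Finset.Icc (1:ℤ) (n:ℤ)).card • π 0 := by
    rw [← Finset.sum_const, ← Finset.sum_add_distrib]
    exact Finset.sum_congr rfl fun i _ => by rw [hval i]
  have hcard : (Finset.Icc (1:ℤ) (n:ℤ)).card = n := by
    rw [Int.card_Icc]; simp
  rw [hsum2, hcard] at hsum
  have hz : π 0 = 0 := by
    have : (n:ℤ) * π 0 = 0 := by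
      have := hsum
      simp only [nsmul_eq_mul] at this
      omega
    have hn' : (n:ℤ) ≠ 0 := by exact_mod_cast hn.ne'
    exact (mul_eq_zero.mp this).resolve_left hn'
  ext i
  rw [hval i, hz]
  simp

lemma code_all_zero {n : ℕ} (hn : 0 < n) {π : Equiv.Perm ℤ} (hA : IsAffine n π)
    (h : ∀ i : ℤ, 1 ≤ i → i ≤ (n:ℤ) → codeEntry π i = 0) (i : ℤ) : codeEntry π i = 0 := by
  rw [codeEntry_resw hn hA]
  exact h _ (resw_ge hn i) (resw_le hn i)

lemma eq_one_of_code_zero {n : ℕ} (hn : 0 < n) {π : Equiv.Perm ℤ} (hA : IsAffine n π)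
    (h : ∀ i : ℤ, 1 ≤ i → i ≤ (n:ℤ) → codeEntry π i = 0) : π = 1 := by
  apply eq_one_of_mono hn hA
  intro i
  have h0 := code_all_zero hn hA h i
  rw [codeEntry_eq_zero_iff hn hA] at h0
  have := h0 (i + 1) (by omega)
  have hne : π i ≠ π (i + 1) := fun hc => by
    have := π.injective hc; omega
  omega

lemma exists_descent {n : ℕ} (hn : 0 < n) {π : Equiv.Perm ℤ} (hA : IsAffine n π)
    (hne : π ≠ 1) : ∃ i : ℤ, 1 ≤ i ∧ i ≤ (n:ℤ) ∧ π (i + 1) < π i := by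
  by_contra hc
  push_neg at hc
  apply hne
  apply eq_one_of_mono hn hA
  intro i
  obtain ⟨m, hm⟩ := resw_spec (n := n) i
  have h1 := resw_ge hn i
  have h2 := resw_le hn i
  have e1 : π i = π (resw n i) + m * n := by
    conv_lhs => rw [hm]
    exact shift_mul hA.1 m _
  have e2 : π (i + 1) = π (resw n i + 1) + m * n := by
    have : i + 1 = (resw n i + 1) + m * n := by omega
    rw [this]
    exact shift_mul hA.1 m _
  have h3 := hc (resw n i) h1 h2
  have hne2 : π (resw n i) ≠ π (resw n i + 1) := fun hcc => by
    have := π.injective hcc; omega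
  omega

lemma shift_mul_fun {n : ℕ} {g : ℤ → ℤ} (hg : ∀ i : ℤ, g (i + n) = g i + n) :
    ∀ (m i : ℤ), g (i + m * n) = g i + m * n := by
  have hneg : ∀ i : ℤ, g (i - n) = g i - n := by
    intro i; have := hg (i - n); simp at this; omega
  intro m
  induction m using Int.induction_on with
  | zero => simp
  | succ k ih =>
      intro i
      have h1 : i + (k + 1 : ℤ) * n = (i + k * n) + n := by ring
      rw [h1, hg, ih]; ring
  | pred k ih =>
      intro i
      have h1 : i + (-k - 1 : ℤ) * n = (i + (-k) * n) - n := by ring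
      rw [h1, hneg, ih]; ring

lemma periodic_mul {n : ℕ} {D : ℤ → ℤ} (hD : ∀ x : ℤ, D (x + n) = D x) :
    ∀ (m x : ℤ), D (x + m * n) = D x := by
  have hneg : ∀ x : ℤ, D (x - n) = D x := by
    intro x; have := hD (x - n); simp at this; omega
  intro m
  induction m using Int.induction_on with
  | zero => simp
  | succ k ih =>
      intro x
      have h1 : x + (k + 1 : ℤ) * n = (x + k * n) + n := by ring
      rw [h1, hD, ih]
  | pred k ih =>
      intro x
      have h1 : x + (-k - 1 : ℤ) * n = (x + (-k) * n) - n := by ring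
      rw [h1, hneg, ih]

lemma resw_mod {n : ℕ} (i : ℤ) : (resw n i - i) % (n:ℤ) = 0 := by
  obtain ⟨m, hm⟩ := resw_spec (n := n) i
  exact modz_iff.mpr ⟨-m, by rw [neg_mul]; omega⟩

lemma resw_of_mod {n : ℕ} (hn : 0 < n) {k i : ℤ} (h1 : 1 ≤ k) (h2 : k ≤ n)
    (h3 : (k - i) % (n:ℤ) = 0) : k = resw n i :=
  resw_unique hn h1 h2 (modz_iff.mp h3)

lemma not_both_mod {n : ℕ} (h2 : 2 ≤ n) {i k : ℤ} (ha : (k - i) % (n:ℤ) = 0) :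
    ¬ (k - (i + 1)) % (n:ℤ) = 0 := by
  intro h
  obtain ⟨m, hm⟩ := modz_iff.mp ha
  obtain ⟨m', hm'⟩ := modz_iff.mp h
  have he : (1:ℤ) = (m - m') * n := by rw [sub_mul]; omega
  have hn' : (2:ℤ) ≤ (n:ℤ) := by exact_mod_cast h2
  rcases lt_trichotomy (m - m') 0 with hc | hc | hc
  · nlinarith
  · rw [hc] at he; norm_num at he
  · nlinarith

lemma sum_comp_periodic {n : ℕ} (hn : 0 < n) {f : ℤ → ℤ} (hfinj : Function.Injective f)
    (hfsh : ∀ x : ℤ, f (x + n) = f x + n) {D : ℤ → ℤ} (hD : ∀ x : ℤ, D (x + n) = D x) :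
    ∑ k ∈ Finset.Icc (1:ℤ) (n:ℤ), D (f k) = ∑ k ∈ Finset.Icc (1:ℤ) (n:ℤ), D k := by
  set s := Finset.Icc (1:ℤ) (n:ℤ) with hs
  set φ : ℤ → ℤ := fun k => resw n (f k) with hφ
  have hmem : ∀ k, φ k ∈ s := by
    intro k
    simp only [hs, Finset.mem_Icc]
    exact ⟨resw_ge hn _, resw_le hn _⟩
  have hval : ∀ k, D (f k) = D (φ k) := by
    intro k
    obtain ⟨m, hm⟩ := resw_spec (n := n) (f k)
    conv_lhs => rw [hm]
    exact periodic_mul hD m _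
  have hinj : ∀ x ∈ s, ∀ y ∈ s, φ x = φ y → x = y := by
    intro x hx y hy hxy
    obtain ⟨m, hm⟩ := resw_spec (n := n) (f x)
    obtain ⟨m', hm'⟩ := resw_spec (n := n) (f y)
    have hxy' : resw n (f x) = resw n (f y) := hxy
    rw [hxy'] at hm
    have hfy : f y = f (x + (m' - m) * n) := by
      rw [shift_mul_fun hfsh]
      have : (m' - m) * (n:ℤ) = m' * n - m * n := by ring
      omega
    have hyx : y = x + (m' - m) * n := hfinj hfy
    simp only [hs, Finset.mem_Icc] at hx hy
    have h1 : y = resw n x := resw_unique hn hy.1 hy.2 ⟨m' - m, hyx⟩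
    have h2 : x = resw n x := resw_unique hn hx.1 hx.2 ⟨0, by ring⟩
    omega
  have himg : s.image φ = s := by
    apply Finset.eq_of_subset_of_card_le
    · intro j hj
      obtain ⟨k, _, rfl⟩ := Finset.mem_image.mp hj
      exact hmem k
    · rw [Finset.card_image_of_injOn hinj]
  calc ∑ k ∈ s, D (f k) = ∑ k ∈ s, D (φ k) := Finset.sum_congr rfl fun k _ => hval k
    _ = ∑ j ∈ s.image φ, D j := (Finset.sum_image hinj).symm
    _ = ∑ j ∈ s, D j := by rw [himg]

lemma IsAffine_one (n : ℕ) : IsAffine n 1 := ⟨fun i => rfl, rfl⟩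

lemma IsAffine_mul {n : ℕ} (hn : 0 < n) {π ρ : Equiv.Perm ℤ} (hπ : IsAffine n π)
    (hρ : IsAffine n ρ) : IsAffine n (π * ρ) := by
  constructor
  · intro i
    simp only [Equiv.Perm.mul_apply]
    rw [hρ.1, hπ.1]
  · have hD : ∀ x : ℤ, (π x - x) = (π (x + n) - (x + n)) := by
      intro x; rw [hπ.1]; ring
    have key : ∑ k ∈ Finset.Icc (1:ℤ) (n:ℤ), (π (ρ k) - ρ k)
        = ∑ k ∈ Finset.Icc (1:ℤ) (n:ℤ), (π k - k) :=
      sum_comp_periodic (D := fun x => π x - x) hn ρ.injective hρ.1 (fun x => (hD x).symm)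
    have e1 : ∑ k ∈ Finset.Icc (1:ℤ) (n:ℤ), (π (ρ k) - ρ k)
        = (∑ k ∈ Finset.Icc (1:ℤ) (n:ℤ), π (ρ k)) - ∑ k ∈ Finset.Icc (1:ℤ) (n:ℤ), ρ k :=
      Finset.sum_sub_distrib _ _
    have e2 : ∑ k ∈ Finset.Icc (1:ℤ) (n:ℤ), (π k - k)
        = (∑ k ∈ Finset.Icc (1:ℤ) (n:ℤ), π k) - ∑ k ∈ Finset.Icc (1:ℤ) (n:ℤ), k :=
      Finset.sum_sub_distrib _ _
    have := hπ.2
    have := hρ.2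
    simp only [Equiv.Perm.mul_apply]
    omega

lemma IsAffine_affS {n : ℕ} (h2 : 2 ≤ n) (i : ℤ) : IsAffine n (affS n i) := by
  have hn : 0 < n := by omega
  constructor
  · intro k
    rw [affS_apply h2, affS_apply h2]
    exact affTFun_shift i k
  · have hsum : ∀ k ∈ Finset.Icc (1:ℤ) (n:ℤ), affS n i k = k +
        ((if k = resw n i then (1:ℤ) else 0) + (if k = resw n (i+1) then (-1:ℤ) else 0)) := by
      intro k hk
      simp only [Finset.mem_Icc] at hk
      rw [affS_apply h2]
      have hr1 : (resw n i - i) % (n:ℤ) = 0 := resw_mod i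
      have hr2 : (resw n (i+1) - (i+1)) % (n:ℤ) = 0 := resw_mod (i+1)
      by_cases hc1 : (k - i) % (n:ℤ) = 0
      · have hk1 : k = resw n i := resw_of_mod hn hk.1 hk.2 hc1
        have hk2 : k ≠ resw n (i+1) := by
          intro hc
          exact not_both_mod h2 hc1 (by rw [hc]; exact hr2)
        rw [affTFun_eq1 hc1, if_pos hk1, if_neg hk2]; ring
      · by_cases hc2 : (k - (i+1)) % (n:ℤ) = 0
        · have hk2 : k = resw n (i+1) := resw_of_mod hn hk.1 hk.2 hc2
          have hk1 : k ≠ resw n i := fun hc => hc1 (by rw [hc]; exact hr1)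
          rw [affTFun_eq2 h2 hc2, if_neg hk1, if_pos hk2]; ring
        · have hk1 : k ≠ resw n i := fun hc => hc1 (by rw [hc]; exact hr1)
          have hk2 : k ≠ resw n (i+1) := fun hc => hc2 (by rw [hc]; exact hr2)
          rw [affTFun_eq3 hc1 hc2, if_neg hk1, if_neg hk2]; ring
    rw [Finset.sum_congr rfl hsum, Finset.sum_add_distrib, Finset.sum_add_distrib]
    have m1 : resw n i ∈ Finset.Icc (1:ℤ) (n:ℤ) := by
      simp only [Finset.mem_Icc]; exact ⟨resw_ge hn i, resw_le hn i⟩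
    have m2 : resw n (i+1) ∈ Finset.Icc (1:ℤ) (n:ℤ) := by
      simp only [Finset.mem_Icc]; exact ⟨resw_ge hn _, resw_le hn _⟩
    rw [Finset.sum_ite_eq' _ (resw n i) (fun _ => (1:ℤ)),
      Finset.sum_ite_eq' _ (resw n (i+1)) (fun _ => (-1:ℤ)), if_pos m1, if_pos m2]
    simp

lemma ncard_comp_inv {g : ℤ → ℤ} (hg : Function.Involutive g) (Q P : ℤ → Prop)
    (hQ : ∀ j, Q j → Q (g j)) :
    {j | Q j ∧ P (g j)}.ncard = {j | Q j ∧ P j}.ncard := by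
  rw [← Set.ncard_image_of_injective {j | Q j ∧ P (g j)} hg.injective]
  congr 1
  ext j'
  constructor
  · rintro ⟨j, ⟨hjQ, hjP⟩, rfl⟩
    exact ⟨hQ j hjQ, hjP⟩
  · rintro ⟨hjQ, hjP⟩
    exact ⟨g j', ⟨hQ j' hjQ, by rw [hg j']; exact hjP⟩, hg j'⟩

lemma mod_step_ge {n : ℕ} (hn : 0 < n) {i j : ℤ} (h : (j - i) % (n:ℤ) = 0)
    (hlt : i < j) : i + n ≤ j := by
  obtain ⟨m, rfl⟩ := modz_iff.mp h
  have hn' : (0:ℤ) < (n:ℤ) := by exact_mod_cast hn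
  have hm : 1 ≤ m := by nlinarith
  nlinarith

lemma f_maps_gt {n : ℕ} (h2 : 2 ≤ n) (i : ℤ) :
    ∀ j : ℤ, i + 1 < j → i + 1 < affTFun n i (i + 1) j := by
  have hn : 0 < n := by omega
  intro j hj
  by_cases hc1 : (j - i) % (n:ℤ) = 0
  · rw [affTFun_eq1 hc1]; omega
  · by_cases hc2 : (j - (i + 1)) % (n:ℤ) = 0
    · rw [affTFun_eq2 h2 hc2]
      have := mod_step_ge hn hc2 hj
      have hn2 : (2:ℤ) ≤ (n:ℤ) := by exact_mod_cast h2
      omega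
    · rw [affTFun_eq3 hc1 hc2]; exact hj

lemma f_maps_gt' {n : ℕ} (h2 : 2 ≤ n) {i k : ℤ} (hk : ¬ (k - i) % (n:ℤ) = 0) :
    ∀ j : ℤ, k < j → k < affTFun n i (i + 1) j := by
  intro j hj
  by_cases hc1 : (j - i) % (n:ℤ) = 0
  · rw [affTFun_eq1 hc1]; omega
  · by_cases hc2 : (j - (i + 1)) % (n:ℤ) = 0
    · rw [affTFun_eq2 h2 hc2]
      have hne : j - 1 ≠ k := by
        intro hc
        apply hk
        obtain ⟨m, hm⟩ := modz_iff.mp hc2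
        exact modz_iff.mpr ⟨m, by omega⟩
      omega
    · rw [affTFun_eq3 hc1 hc2]; exact hj

lemma sigma_apply {n : ℕ} (h2 : 2 ≤ n) (π : Equiv.Perm ℤ) (i k : ℤ) :
    (π * affS n i) k = π (affTFun n i (i + 1) k) := by
  rw [Equiv.Perm.mul_apply, affS_apply h2]

lemma f_at_i {n : ℕ} (i : ℤ) : affTFun n i (i + 1) i = i + 1 := by
  rw [affTFun_eq1 (by simp)]

lemma f_at_i1 {n : ℕ} (h2 : 2 ≤ n) (i : ℤ) : affTFun n i (i + 1) (i + 1) = i := by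
  rw [affTFun_eq2 h2 (by simp)]; ring

lemma codeEntry_step_i1 {n : ℕ} (h2 : 2 ≤ n) {π : Equiv.Perm ℤ} (hA : IsAffine n π)
    {i : ℤ} (hd : π (i + 1) < π i) :
    codeEntry (π * affS n i) (i + 1) + 1 = codeEntry π i := by
  have hn : 0 < n := by omega
  have hinv : Function.Involutive (affTFun n i (i + 1)) :=
    affTFun_involutive (one_emod_ne h2)
  have hset : codeSet (π * affS n i) (i + 1)
      = {j | (i + 1 < j) ∧ π (affTFun n i (i + 1) j) < π i} := by
    ext j
    simp only [codeSet, Set.mem_setOf_eq, sigma_apply h2, f_at_i1 h2]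
  rw [codeEntry_eq_ncard, hset,
    ncard_comp_inv hinv (fun j => i + 1 < j) (fun x => π x < π i) (f_maps_gt h2 i)]
  have hset2 : {j | (i + 1 < j) ∧ π j < π i} = codeSet π i \ {i + 1} := by
    ext j
    simp only [codeSet, Set.mem_setOf_eq, Set.mem_diff, Set.mem_singleton_iff]
    constructor
    · rintro ⟨h1, h3⟩
      exact ⟨⟨by omega, h3⟩, by omega⟩
    · rintro ⟨⟨h1, h3⟩, h4⟩
      exact ⟨by omega, h3⟩
  rw [hset2, codeEntry_eq_ncard]
  exact Set.ncard_diff_singleton_add_one ⟨by omega, hd⟩ (codeSet_finite hn hA i)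

lemma codeEntry_step_i {n : ℕ} (h2 : 2 ≤ n) {π : Equiv.Perm ℤ} (hA : IsAffine n π)
    {i : ℤ} (hd : π (i + 1) < π i) :
    codeEntry (π * affS n i) i = codeEntry π (i + 1) := by
  have hn : 0 < n := by omega
  have hinv : Function.Involutive (affTFun n i (i + 1)) :=
    affTFun_involutive (one_emod_ne h2)
  have hset : codeSet (π * affS n i) i
      = {j | (i + 1 < j) ∧ π (affTFun n i (i + 1) j) < π (i + 1)} := by
    ext j
    simp only [codeSet, Set.mem_setOf_eq, sigma_apply h2, f_at_i (n := n) i]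
    constructor
    · rintro ⟨h1, h3⟩
      rcases eq_or_lt_of_le (by omega : i + 1 ≤ j) with hc | hc
      · exfalso
        rw [← hc, f_at_i1 h2] at h3
        omega
      · exact ⟨hc, h3⟩
    · rintro ⟨h1, h3⟩
      exact ⟨by omega, h3⟩
  rw [codeEntry_eq_ncard, hset,
    ncard_comp_inv hinv (fun j => i + 1 < j) (fun x => π x < π (i + 1)) (f_maps_gt h2 i),
    codeEntry_eq_ncard]
  rfl

lemma codeEntry_step_other {n : ℕ} (h2 : 2 ≤ n) (π : Equiv.Perm ℤ)
    {i k : ℤ} (hk1 : ¬ (k - i) % (n:ℤ) = 0) (hk2 : ¬ (k - (i + 1)) % (n:ℤ) = 0) :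
    codeEntry (π * affS n i) k = codeEntry π k := by
  have hinv : Function.Involutive (affTFun n i (i + 1)) :=
    affTFun_involutive (one_emod_ne h2)
  have hfk : affTFun n i (i + 1) k = k := affTFun_eq3 hk1 hk2
  have hset : codeSet (π * affS n i) k
      = {j | (k < j) ∧ π (affTFun n i (i + 1) j) < π k} := by
    ext j
    simp only [codeSet, Set.mem_setOf_eq, sigma_apply h2, hfk]
  rw [codeEntry_eq_ncard, hset,
    ncard_comp_inv hinv (fun j => k < j) (fun x => π x < π k) (f_maps_gt' h2 hk1),
    codeEntry_eq_ncard]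
  rfl

lemma descent_iff_code {n : ℕ} (hn : 0 < n) {π : Equiv.Perm ℤ} (hA : IsAffine n π) (i : ℤ) :
    π (i + 1) < π i ↔ codeEntry π (i + 1) < codeEntry π i := by
  constructor
  · intro hd
    have hsub : insert (i + 1) (codeSet π (i + 1)) ⊆ codeSet π i := by
      rintro j hj
      rcases Set.mem_insert_iff.mp hj with rfl | ⟨h1, h3⟩
      · exact ⟨by omega, hd⟩
      · exact ⟨by omega, by omega⟩
    have hni : (i + 1) ∉ codeSet π (i + 1) := fun h => by
      have := h.1; omega
    have h1 : (insert (i + 1) (codeSet π (i + 1))).ncard = (codeSet π (i + 1)).ncard + 1 :=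
      Set.ncard_insert_of_notMem hni (codeSet_finite hn hA (i + 1))
    have h2 : (insert (i + 1) (codeSet π (i + 1))).ncard ≤ (codeSet π i).ncard :=
      Set.ncard_le_ncard hsub (codeSet_finite hn hA i)
    rw [codeEntry_eq_ncard, codeEntry_eq_ncard]
    omega
  · intro hlt
    by_contra hc
    push_neg at hc
    have hne : π i ≠ π (i + 1) := fun h => by
      have := π.injective h; omega
    have hlt2 : π i < π (i + 1) := by omega
    have hsub : codeSet π i ⊆ codeSet π (i + 1) := by
      rintro j ⟨h1, h3⟩
      have hj : j ≠ i + 1 := fun h => by rw [h] at h3; omega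
      exact ⟨by omega, by omega⟩
    have := Set.ncard_le_ncard hsub (codeSet_finite hn hA (i + 1))
    rw [codeEntry_eq_ncard, codeEntry_eq_ncard] at hlt
    omega

noncomputable def totalCode (n : ℕ) (π : Equiv.Perm ℤ) : ℕ :=
  ∑ i ∈ Finset.Icc (1:ℤ) (n:ℤ), codeEntry π i

lemma codeEntry_one (i : ℤ) : codeEntry 1 i = 0 := by
  rw [codeEntry_eq_ncard]
  convert Set.ncard_empty ℤ
  ext j
  simp only [codeSet, Equiv.Perm.one_apply, Set.mem_setOf_eq, Set.mem_empty_iff_false,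
    iff_false, not_and, not_lt]
  omega

lemma totalCode_one (n : ℕ) : totalCode n 1 = 0 := by
  unfold totalCode
  exact Finset.sum_eq_zero fun i _ => codeEntry_one i

lemma sum_two_swap {s : Finset ℤ} {a b : ℤ} (ha : a ∈ s) (hb : b ∈ s) (hab : a ≠ b)
    (F G : ℤ → ℕ) (hrest : ∀ k ∈ s, k ≠ a → k ≠ b → F k = G k) :
    ∑ k ∈ s, F k + (G a + G b) = ∑ k ∈ s, G k + (F a + F b) := by
  have hbe : b ∈ s.erase a := Finset.mem_erase.mpr ⟨hab.symm, hb⟩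
  have e1 : ∑ k ∈ s, F k = F a + (F b + ∑ k ∈ (s.erase a).erase b, F k) := by
    rw [Finset.add_sum_erase _ F hbe, Finset.add_sum_erase _ F ha]
  have e2 : ∑ k ∈ s, G k = G a + (G b + ∑ k ∈ (s.erase a).erase b, G k) := by
    rw [Finset.add_sum_erase _ G hbe, Finset.add_sum_erase _ G ha]
  have e3 : ∑ k ∈ (s.erase a).erase b, F k = ∑ k ∈ (s.erase a).erase b, G k := by
    apply Finset.sum_congr rfl
    intro k hk
    have h1 := Finset.mem_erase.mp hk
    have h2 := Finset.mem_erase.mp h1.2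
    exact hrest k h2.2 h2.1 h1.1
  omega

lemma resw_eq_self {n : ℕ} (hn : 0 < n) {k : ℤ} (h1 : 1 ≤ k) (h2 : k ≤ n) :
    resw n k = k := (resw_unique hn h1 h2 ⟨0, by ring⟩).symm

lemma resw_congr {n : ℕ} (hn : 0 < n) {k k' : ℤ} (h : (k' - k) % (n:ℤ) = 0) :
    resw n k' = resw n k := by
  apply resw_unique hn (resw_ge hn k') (resw_le hn k')
  obtain ⟨m, hm⟩ := modz_iff.mp h
  obtain ⟨m', hm'⟩ := resw_spec (n := n) k'
  exact ⟨m - m', by rw [sub_mul]; omega⟩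

lemma totalCode_step {n : ℕ} (h2 : 2 ≤ n) {π : Equiv.Perm ℤ} (hA : IsAffine n π)
    {i : ℤ} (hd : π (i + 1) < π i) :
    totalCode n π = totalCode n (π * affS n i) + 1 := by
  have hn : 0 < n := by omega
  have hσA : IsAffine n (π * affS n i) := IsAffine_mul hn hA (IsAffine_affS h2 i)
  set a := resw n i with hadef
  set b := resw n (i + 1) with hbdef
  have hra : (a - i) % (n:ℤ) = 0 := resw_mod i
  have hrb : (b - (i + 1)) % (n:ℤ) = 0 := resw_mod (i + 1)
  have hab : a ≠ b := by
    intro hc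
    exact not_both_mod h2 hra (by rw [hc]; exact hrb)
  have ha : a ∈ Finset.Icc (1:ℤ) (n:ℤ) := by
    simp only [Finset.mem_Icc]; exact ⟨resw_ge hn i, resw_le hn i⟩
  have hb : b ∈ Finset.Icc (1:ℤ) (n:ℤ) := by
    simp only [Finset.mem_Icc]; exact ⟨resw_ge hn _, resw_le hn _⟩
  have hFa : codeEntry (π * affS n i) a = codeEntry π (i + 1) := by
    rw [codeEntry_congr hn hσA (modz_iff.mp hra)]
    exact codeEntry_step_i h2 hA hd
  have hFb : codeEntry (π * affS n i) b + 1 = codeEntry π i := by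
    rw [codeEntry_congr hn hσA (modz_iff.mp hrb)]
    exact codeEntry_step_i1 h2 hA hd
  have hGa : codeEntry π a = codeEntry π i := codeEntry_congr hn hA (modz_iff.mp hra)
  have hGb : codeEntry π b = codeEntry π (i + 1) := codeEntry_congr hn hA (modz_iff.mp hrb)
  have hrest : ∀ k ∈ Finset.Icc (1:ℤ) (n:ℤ), k ≠ a → k ≠ b →
      codeEntry (π * affS n i) k = codeEntry π k := by
    intro k hk hka hkb
    simp only [Finset.mem_Icc] at hk
    apply codeEntry_step_other h2
    · intro hc
      exact hka (resw_of_mod hn hk.1 hk.2 hc)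
    · intro hc
      exact hkb (resw_of_mod hn hk.1 hk.2 hc)
  have key := sum_two_swap ha hb hab (fun k => codeEntry (π * affS n i) k)
    (fun k => codeEntry π k) hrest
  unfold totalCode
  omega

lemma affS_one_eq (i : ℤ) : affS 1 i = 1 := by
  unfold affS affT
  rw [dif_pos]
  simp [Int.emod_one]

lemma IsAffine_affS' {n : ℕ} (hn : 0 < n) (i : ℤ) : IsAffine n (affS n i) := by
  rcases Nat.lt_or_ge n 2 with h | h2
  · have h1 : n = 1 := by omega
    subst h1
    rw [affS_one_eq]
    exact IsAffine_one 1
  · exact IsAffine_affS h2 i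

lemma prod_affine {n : ℕ} (hn : 0 < n) (w : List ℤ) :
    IsAffine n ((w.map (affS n)).prod) := by
  induction w with
  | nil => simpa using IsAffine_one n
  | cons x w ih =>
      rw [List.map_cons, List.prod_cons]
      exact IsAffine_mul hn (IsAffine_affS' hn x) ih

lemma eq_one_of_dim_one {π : Equiv.Perm ℤ} (hA : IsAffine 1 π) : π = 1 := by
  apply eq_one_of_mono (by norm_num) hA
  intro i
  have := hA.1 i
  simp only [Nat.cast_one] at this
  omega

lemma exists_word {n : ℕ} (hn : 0 < n) : ∀ (N : ℕ) (π : Equiv.Perm ℤ), IsAffine n π →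
    totalCode n π = N →
    ∃ w : List ℤ, (∀ x ∈ w, 1 ≤ x ∧ x ≤ (n:ℤ)) ∧ (w.map (affS n)).prod = π ∧
      w.length = totalCode n π := by
  intro N
  induction N using Nat.strong_induction_on with
  | _ N ih =>
    intro π hA hN
    by_cases hone : π = 1
    · subst hone
      exact ⟨[], by simp, by simp, by simp [totalCode_one]⟩
    · have h2 : 2 ≤ n := by
        rcases Nat.lt_or_ge n 2 with h | h2
        · have h1 : n = 1 := by omega
          subst h1
          exact absurd (eq_one_of_dim_one hA) hone
        · exact h2
      obtain ⟨i, hi1, hi2, hd⟩ := exists_descent hn hA hone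
      have hstep := totalCode_step h2 hA hd
      have hσA : IsAffine n (π * affS n i) := IsAffine_mul hn hA (IsAffine_affS h2 i)
      obtain ⟨w, hw1, hw2, hw3⟩ := ih (totalCode n (π * affS n i)) (by omega) _ hσA rfl
      refine ⟨w ++ [i], ?_, ?_, ?_⟩
      · intro x hx
        rcases List.mem_append.mp hx with h | h
        · exact hw1 x h
        · simp at h
          subst h
          exact ⟨hi1, hi2⟩
      · rw [List.map_append, List.prod_append, hw2]
        simp only [List.map_cons, List.map_nil, List.prod_cons, List.prod_nil, mul_one]
        rw [mul_assoc, affS_mul_self, mul_one]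
      · simp only [List.length_append, List.length_cons, List.length_nil, hw3]
        omega

lemma code_le_word {n : ℕ} (hn : 0 < n) (w : List ℤ) :
    totalCode n ((w.map (affS n)).prod) ≤ w.length := by
  induction w using List.reverseRecOn with
  | nil => simp [totalCode_one]
  | append_singleton w x ih =>
      rcases Nat.lt_or_ge n 2 with h | h2
      · have h1 : n = 1 := by omega
        subst h1
        have : ((w ++ [x]).map (affS 1)).prod = 1 :=
          eq_one_of_dim_one (prod_affine (by norm_num) _)
        rw [this, totalCode_one]
        omega
      · have hσA : IsAffine n ((w.map (affS n)).prod) := prod_affine hn w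
        set σ := (w.map (affS n)).prod with hσ
        have hprod : ((w ++ [x]).map (affS n)).prod = σ * affS n x := by
          rw [List.map_append, List.prod_append]
          simp only [List.map_cons, List.map_nil, List.prod_cons, List.prod_nil, mul_one]
          rfl
        rw [hprod, List.length_append, List.length_cons, List.length_nil]
        rcases lt_trichotomy (σ (x + 1)) (σ x) with hc | hc | hc
        · have := totalCode_step h2 hσA hc
          omega
        · exact absurd (σ.injective hc) (by omega)
        · have hπA : IsAffine n (σ * affS n x) := IsAffine_mul hn hσA (IsAffine_affS h2 x)
          have hd' : (σ * affS n x) (x + 1) < (σ * affS n x) x := by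
            rw [sigma_apply h2, sigma_apply h2, f_at_i, f_at_i1 h2]
            exact hc
          have hback : (σ * affS n x) * affS n x = σ := by
            rw [mul_assoc, affS_mul_self, mul_one]
          have := totalCode_step h2 hπA hd'
          rw [hback] at this
          omega

lemma wordLength_eq_totalCode {n : ℕ} (hn : 0 < n) {π : Equiv.Perm ℤ}
    (hA : IsAffine n π) : wordLength n π = totalCode n π := by
  obtain ⟨w, hw1, hw2, hw3⟩ := exists_word hn (totalCode n π) π hA rfl
  have hmem : totalCode n π ∈ {l : ℕ | ∃ w : List ℤ,
      (∀ x ∈ w, 1 ≤ x ∧ x ≤ (n : ℤ)) ∧ (w.map (affS n)).prod = π ∧ w.length = l} :=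
    ⟨w, hw1, hw2, hw3⟩
  apply le_antisymm
  · exact Nat.sInf_le hmem
  · apply le_csInf ⟨_, hmem⟩
    rintro l ⟨w', hw1', hw2', rfl⟩
    rw [← hw2']
    exact code_le_word hn w'

lemma code_inj {n : ℕ} (hn : 0 < n) : ∀ (N : ℕ) (π σ : Equiv.Perm ℤ),
    IsAffine n π → IsAffine n σ → totalCode n π = N →
    (∀ i : ℤ, 1 ≤ i → i ≤ (n:ℤ) → codeEntry π i = codeEntry σ i) → π = σ := by
  intro N
  induction N using Nat.strong_induction_on with
  | _ N ih =>
    intro π σ hπ hσ hN hcode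
    have hall : ∀ i : ℤ, codeEntry π i = codeEntry σ i := by
      intro i
      rw [codeEntry_resw hn hπ, codeEntry_resw hn hσ]
      exact hcode _ (resw_ge hn i) (resw_le hn i)
    by_cases hone : π = 1
    · subst hone
      symm
      apply eq_one_of_code_zero hn hσ
      intro i h1 h2
      rw [← hcode i h1 h2]
      exact codeEntry_one i
    · have h2 : 2 ≤ n := by
        rcases Nat.lt_or_ge n 2 with h | h2
        · have h1 : n = 1 := by omega
          subst h1
          exact absurd (eq_one_of_dim_one hπ) hone
        · exact h2
      obtain ⟨i, _, _, hd⟩ := exists_descent hn hπ hone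
      have hdσ : σ (i + 1) < σ i := by
        rw [descent_iff_code hn hσ i, ← hall, ← hall]
        exact (descent_iff_code hn hπ i).mp hd
      have hπ' : IsAffine n (π * affS n i) := IsAffine_mul hn hπ (IsAffine_affS h2 i)
      have hσ' : IsAffine n (σ * affS n i) := IsAffine_mul hn hσ (IsAffine_affS h2 i)
      have hcode' : ∀ k : ℤ, 1 ≤ k → k ≤ (n:ℤ) →
          codeEntry (π * affS n i) k = codeEntry (σ * affS n i) k := by
        intro k hk1 hk2
        by_cases hc1 : (k - i) % (n:ℤ) = 0
        · have e : ∀ ρ : Equiv.Perm ℤ, IsAffine n ρ → codeEntry ρ k = codeEntry ρ i :=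
            fun ρ hρ => codeEntry_congr hn hρ (modz_iff.mp hc1)
          rw [e _ hπ', e _ hσ', codeEntry_step_i h2 hπ hd, codeEntry_step_i h2 hσ hdσ]
          exact hall (i + 1)
        · by_cases hc2 : (k - (i + 1)) % (n:ℤ) = 0
          · have e : ∀ ρ : Equiv.Perm ℤ, IsAffine n ρ → codeEntry ρ k = codeEntry ρ (i + 1) :=
              fun ρ hρ => codeEntry_congr hn hρ (modz_iff.mp hc2)
            rw [e _ hπ', e _ hσ']
            have e1 := codeEntry_step_i1 h2 hπ hd
            have e2 := codeEntry_step_i1 h2 hσ hdσ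
            have := hall i
            omega
          · rw [codeEntry_step_other h2 π hc1 hc2, codeEntry_step_other h2 σ hc1 hc2]
            exact hall k
      have hstep := totalCode_step h2 hπ hd
      have heq := ih (totalCode n (π * affS n i)) (by omega) _ _ hπ' hσ' rfl hcode'
      have : (π * affS n i) * affS n i = (σ * affS n i) * affS n i := by rw [heq]
      rwa [mul_assoc, affS_mul_self, mul_one, mul_assoc, affS_mul_self, mul_one] at this

lemma code_surj {n : ℕ} (hn : 0 < n) : ∀ (N : ℕ) (v : ℤ → ℕ),
    (∃ i : ℤ, 1 ≤ i ∧ i ≤ (n:ℤ) ∧ v i = 0) →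
    (∑ i ∈ Finset.Icc (1:ℤ) (n:ℤ), v i) = N →
    ∃ π : Equiv.Perm ℤ, IsAffine n π ∧
      ∀ i : ℤ, 1 ≤ i → i ≤ (n:ℤ) → codeEntry π i = v i := by
  intro N
  induction N using Nat.strong_induction_on with
  | _ N ih =>
    intro v hz hN
    rcases Nat.eq_zero_or_pos N with h0 | hNpos
    · subst h0
      have hzero : ∀ i ∈ Finset.Icc (1:ℤ) (n:ℤ), v i = 0 :=
        Finset.sum_eq_zero_iff.mp hN
      refine ⟨1, IsAffine_one n, fun i h1 h2 => ?_⟩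
      rw [codeEntry_one]
      exact (hzero i (Finset.mem_Icc.mpr ⟨h1, h2⟩)).symm
    · obtain ⟨i₀, hi₀1, hi₀2, hi₀z⟩ := hz
      have h2 : 2 ≤ n := by
        by_contra hcon
        have h1 : n = 1 := by omega
        subst h1
        simp only [Nat.cast_one] at hi₀2 hN
        have hi : i₀ = 1 := by omega
        subst hi
        rw [Finset.Icc_self, Finset.sum_singleton] at hN
        omega
      classical
      set vp : ℤ → ℕ := fun k => v (resw n k) with hvp
      have hvp_win : ∀ k : ℤ, 1 ≤ k → k ≤ (n:ℤ) → vp k = v k := fun k h1 h2 => by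
        simp only [hvp]; rw [resw_eq_self hn h1 h2]
      have hvp_congr : ∀ {k k' : ℤ}, (k' - k) % (n:ℤ) = 0 → vp k' = vp k := by
        intro k k' h
        simp only [hvp]; rw [resw_congr hn h]
      have hsum_ne : ∑ i ∈ Finset.Icc (1:ℤ) (n:ℤ), v i ≠ 0 := by omega
      obtain ⟨j, hjmem, hjne⟩ := Finset.exists_ne_zero_of_sum_ne_zero hsum_ne
      simp only [Finset.mem_Icc] at hjmem
      have hSne : ∃ m : ℕ, vp (j + (m:ℤ)) = 0 := by
        refine ⟨(i₀ + n - j).toNat, ?_⟩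
        have hge : (0:ℤ) ≤ i₀ + (n:ℤ) - j := by omega
        rw [Int.toNat_of_nonneg hge]
        have he : j + (i₀ + (n:ℤ) - j) = i₀ + 1 * n := by ring
        rw [he, hvp_congr (by rw [modz_iff]; exact ⟨1, rfl⟩), hvp_win i₀ hi₀1 hi₀2]
        exact hi₀z
      set m₀ := Nat.find hSne with hm₀def
      have hm₀ : vp (j + (m₀:ℤ)) = 0 := Nat.find_spec hSne
      have hm₀pos : 0 < m₀ := by
        by_contra hcon
        have h0 : m₀ = 0 := by omega
        rw [h0] at hm₀
        simp only [Nat.cast_zero, add_zero] at hm₀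
        rw [hvp_win j hjmem.1 hjmem.2] at hm₀
        exact hjne hm₀
      set i := j + (m₀:ℤ) - 1 with hidef
      have hprev : ¬ vp (j + ((m₀ - 1 : ℕ) : ℤ)) = 0 :=
        Nat.find_min hSne (by omega)
      have hprev' : vp i ≠ 0 := by
        have he : j + ((m₀ - 1 : ℕ) : ℤ) = i := by omega
        rw [he] at hprev
        exact hprev
      have hdv : vp (i + 1) < vp i := by
        have hi1 : i + 1 = j + (m₀:ℤ) := by omega
        rw [hi1, hm₀]
        omega
      set a := resw n i with hadef
      set b := resw n (i + 1) with hbdef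
      have hra : (a - i) % (n:ℤ) = 0 := resw_mod i
      have hrb : (b - (i + 1)) % (n:ℤ) = 0 := resw_mod (i + 1)
      have hab : a ≠ b := fun hc => not_both_mod h2 hra (by rw [hc]; exact hrb)
      have ha : a ∈ Finset.Icc (1:ℤ) (n:ℤ) :=
        Finset.mem_Icc.mpr ⟨resw_ge hn i, resw_le hn i⟩
      have hb : b ∈ Finset.Icc (1:ℤ) (n:ℤ) :=
        Finset.mem_Icc.mpr ⟨resw_ge hn _, resw_le hn _⟩
      set v' : ℤ → ℕ := fun k => if (k - i) % (n:ℤ) = 0 then vp (i + 1)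
        else if (k - (i + 1)) % (n:ℤ) = 0 then vp i - 1 else vp k with hv'def
      have hv'a : v' a = vp (i + 1) := by
        simp only [hv'def]; rw [if_pos hra]
      have hbni : ¬ (b - i) % (n:ℤ) = 0 := fun hc => not_both_mod h2 hc hrb
      have hv'b : v' b = vp i - 1 := by
        simp only [hv'def]; rw [if_neg hbni, if_pos hrb]
      have hv'rest : ∀ k ∈ Finset.Icc (1:ℤ) (n:ℤ), k ≠ a → k ≠ b → v' k = v k := by
        intro k hk hka hkb
        rw [Finset.mem_Icc] at hk
        have hc1 : ¬ (k - i) % (n:ℤ) = 0 := fun hc => hka (resw_of_mod hn hk.1 hk.2 hc)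
        have hc2 : ¬ (k - (i + 1)) % (n:ℤ) = 0 := fun hc => hkb (resw_of_mod hn hk.1 hk.2 hc)
        simp only [hv'def]; rw [if_neg hc1, if_neg hc2]
        exact hvp_win k hk.1 hk.2
      have hz' : ∃ k : ℤ, 1 ≤ k ∧ k ≤ (n:ℤ) ∧ v' k = 0 := by
        by_cases hc1 : (i₀ - i) % (n:ℤ) = 0
        · exfalso
          have := hvp_congr hc1
          rw [hvp_win i₀ hi₀1 hi₀2, hi₀z] at this
          omega
        · by_cases hc2 : (i₀ - (i + 1)) % (n:ℤ) = 0
          · refine ⟨a, resw_ge hn i, resw_le hn i, ?_⟩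
            rw [hv'a, ← hvp_congr hc2, hvp_win i₀ hi₀1 hi₀2]
            exact hi₀z
          · refine ⟨i₀, hi₀1, hi₀2, ?_⟩
            simp only [hv'def]; rw [if_neg hc1, if_neg hc2, hvp_win i₀ hi₀1 hi₀2]
            exact hi₀z
      have hva : v a = vp i := by
        rw [← hvp_win a (resw_ge hn i) (resw_le hn i)]
        exact hvp_congr hra
      have hvb : v b = vp (i + 1) := by
        rw [← hvp_win b (resw_ge hn _) (resw_le hn _)]
        exact hvp_congr hrb
      have hsum' : ∑ k ∈ Finset.Icc (1:ℤ) (n:ℤ), v' k = N - 1 := by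
        have key := sum_two_swap ha hb hab v' v hv'rest
        rw [hva, hvb, hv'a, hv'b, hN] at key
        omega
      obtain ⟨σ, hσA, hσcode⟩ := ih (N - 1) (by omega) v' hz' hsum'
      have hσi : codeEntry σ i = vp (i + 1) := by
        rw [← codeEntry_congr hn hσA (modz_iff.mp hra),
          hσcode a (resw_ge hn i) (resw_le hn i), hv'a]
      have hσi1 : codeEntry σ (i + 1) = vp i - 1 := by
        rw [← codeEntry_congr hn hσA (modz_iff.mp hrb),
          hσcode b (resw_ge hn _) (resw_le hn _), hv'b]
      have hasc : σ i < σ (i + 1) := by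
        have hnd : ¬ σ (i + 1) < σ i := by
          rw [descent_iff_code hn hσA i, hσi, hσi1]
          omega
        have hne : σ i ≠ σ (i + 1) := fun h => by have := σ.injective h; omega
        omega
      set π := σ * affS n i with hπdef
      have hπA : IsAffine n π := IsAffine_mul hn hσA (IsAffine_affS h2 i)
      have hd : π (i + 1) < π i := by
        simp only [hπdef]
        rw [sigma_apply h2, sigma_apply h2, f_at_i, f_at_i1 h2]
        exact hasc
      have hback : π * affS n i = σ := by
        simp only [hπdef]; rw [mul_assoc, affS_mul_self, mul_one]
      refine ⟨π, hπA, ?_⟩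
      intro k hk1 hk2
      by_cases hc1 : (k - i) % (n:ℤ) = 0
      · rw [codeEntry_congr hn hπA (modz_iff.mp hc1)]
        have hstep := codeEntry_step_i1 h2 hπA hd
        rw [hback, hσi1] at hstep
        have hvk : v k = vp i := by
          rw [← hvp_win k hk1 hk2]
          exact hvp_congr hc1
        omega
      · by_cases hc2 : (k - (i + 1)) % (n:ℤ) = 0
        · rw [codeEntry_congr hn hπA (modz_iff.mp hc2)]
          have hstep := codeEntry_step_i h2 hπA hd
          rw [hback, hσi] at hstep
          have hvk : v k = vp (i + 1) := by
            rw [← hvp_win k hk1 hk2]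
            exact hvp_congr hc2
          omega
        · have hstep := codeEntry_step_other h2 π hc1 hc2
          rw [hback] at hstep
          rw [← hstep, hσcode k hk1 hk2]
          simp only [hv'def]; rw [if_neg hc1, if_neg hc2]
          exact hvp_win k hk1 hk2
/-- the code is a bijection from `S̃_n` onto the set of `n`-tuples of
nonnegative integers with at least one zero entry, and the sum of the code entries
of `π` is `ℓ(π)`. -/
theorem code_bijection (n : ℕ) (hn : 0 < n) :
    (∀ π : Equiv.Perm ℤ, IsAffine n π →
      ∃ i : ℤ, 1 ≤ i ∧ i ≤ n ∧ codeEntry π i = 0) ∧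
    (∀ π σ : Equiv.Perm ℤ, IsAffine n π → IsAffine n σ →
      (∀ i : ℤ, 1 ≤ i → i ≤ n → codeEntry π i = codeEntry σ i) → π = σ) ∧
    (∀ v : ℤ → ℕ, (∃ i : ℤ, 1 ≤ i ∧ i ≤ n ∧ v i = 0) →
      ∃ π : Equiv.Perm ℤ, IsAffine n π ∧
        ∀ i : ℤ, 1 ≤ i → i ≤ n → codeEntry π i = v i) ∧
    (∀ π : Equiv.Perm ℤ, IsAffine n π →
      ∑ i ∈ Finset.Icc (1 : ℤ) (n : ℤ), codeEntry π i = wordLength n π) := by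
  refine ⟨?_, ?_, ?_, ?_⟩
  · intro π hA
    exact exists_zero_code hn hA
  · intro π σ hπ hσ hcode
    exact code_inj hn (totalCode n π) π σ hπ hσ rfl hcode
  · intro v hv
    exact code_surj hn (∑ i ∈ Finset.Icc (1:ℤ) (n:ℤ), v i) v hv rfl
  · intro π hA
    exact (wordLength_eq_totalCode hn hA).symm
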